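/- (Long run rent growth.) Suppose 0 < γ < 1. Then in any equilibrium (S_t), the long run rent growth rate satisfies limsup_{t→∞} r_t^{1/t} = G^γ. -/

import Mathlib

open Real Filter Set Topology

/-- Assumption C: `c` is a positive, homogeneous of degree 1, twice continuously
differentiable function on `(0,∞)²` with partial derivatives `cy, cz > 0`, second partial
derivatives `cyy, czz < 0`, and Inada conditions. -/
structure AssumptionC (c cy cz cyy cyz czz : ℝ → ℝ → ℝ) : Prop where
  c_pos : ∀ ⦃y z : ℝ⦄, 0 < y → 0 < z → 0 < c y z
  homog : ∀ ⦃l y z : ℝ⦄, 0 < l → 0 < y → 0 < z → c (l * y) (l * z) = l * c y z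
  hderiv_y : ∀ ⦃y z : ℝ⦄, 0 < y → 0 < z → HasDerivAt (fun u => c u z) (cy y z) y
  hderiv_z : ∀ ⦃y z : ℝ⦄, 0 < y → 0 < z → HasDerivAt (fun v => c y v) (cz y z) z
  hderiv_yy : ∀ ⦃y z : ℝ⦄, 0 < y → 0 < z → HasDerivAt (fun u => cy u z) (cyy y z) y
  hderiv_yz : ∀ ⦃y z : ℝ⦄, 0 < y → 0 < z → HasDerivAt (fun v => cy y v) (cyz y z) z
  hderiv_zy : ∀ ⦃y z : ℝ⦄, 0 < y → 0 < z → HasDerivAt (fun u => cz u z) (cyz y z) y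
  hderiv_zz : ∀ ⦃y z : ℝ⦄, 0 < y → 0 < z → HasDerivAt (fun v => cz y v) (czz y z) z
  cy_pos : ∀ ⦃y z : ℝ⦄, 0 < y → 0 < z → 0 < cy y z
  cz_pos : ∀ ⦃y z : ℝ⦄, 0 < y → 0 < z → 0 < cz y z
  cyy_neg : ∀ ⦃y z : ℝ⦄, 0 < y → 0 < z → cyy y z < 0
  czz_neg : ∀ ⦃y z : ℝ⦄, 0 < y → 0 < z → czz y z < 0
  cont2 : ContinuousOn (fun p : ℝ × ℝ => (cyy p.1 p.2, cyz p.1 p.2, czz p.1 p.2))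
    {p : ℝ × ℝ | 0 < p.1 ∧ 0 < p.2}
  inada_y : ∀ ⦃z : ℝ⦄, 0 < z → Tendsto (fun y => cy y z) (𝓝[>] (0:ℝ)) atTop
  inada_z : ∀ ⦃y : ℝ⦄, 0 < y → Tendsto (fun z => cz y z) (𝓝[>] (0:ℝ)) atTop

/-- An equilibrium: `0 < S t < e1·G^t` and the difference equation
`S_{t+1}·c_z = S_t·c_y − m·c^γ` at `(y_t, z_t) = (e1·G^t − S_t, e2·G^{t+1} + S_{t+1})`. -/
def IsEquilibrium (c cy cz : ℝ → ℝ → ℝ) (e1 e2 G γ m : ℝ) (S : ℕ → ℝ) : Prop :=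
  ∀ t : ℕ, 0 < S t ∧ S t < e1 * G ^ t ∧
    S (t + 1) * cz (e1 * G ^ t - S t) (e2 * G ^ (t + 1) + S (t + 1)) =
      S t * cy (e1 * G ^ t - S t) (e2 * G ^ (t + 1) + S (t + 1)) -
        m * c (e1 * G ^ t - S t) (e2 * G ^ (t + 1) + S (t + 1)) ^ γ

/-- The rent `r_t = m·c(y_t,z_t)^γ / c_y(y_t,z_t)`. -/
noncomputable def rent (c cy : ℝ → ℝ → ℝ) (e1 e2 G γ m : ℝ) (S : ℕ → ℝ) (t : ℕ) : ℝ :=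
  m * c (e1 * G ^ t - S t) (e2 * G ^ (t + 1) + S (t + 1)) ^ γ /
    cy (e1 * G ^ t - S t) (e2 * G ^ (t + 1) + S (t + 1))

/-- The housing price `P_t = S_t − r_t`. -/
noncomputable def price (c cy : ℝ → ℝ → ℝ) (e1 e2 G γ m : ℝ) (S : ℕ → ℝ) (t : ℕ) : ℝ :=
  S t - rent c cy e1 e2 G γ m S t

/-- The gross interest rate `R_t = S_{t+1}/P_t`. -/
noncomputable def irate (c cy : ℝ → ℝ → ℝ) (e1 e2 G γ m : ℝ) (S : ℕ → ℝ) (t : ℕ) : ℝ :=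
  S (t + 1) / price c cy e1 e2 G γ m S t

namespace StmtAux

variable {c cy cz cyy cyz czz : ℝ → ℝ → ℝ}

lemma c_strictMonoY (hC : AssumptionC c cy cz cyy cyz czz) {z : ℝ} (hz : 0 < z) :
    StrictMonoOn (fun y => c y z) (Set.Ioi 0) :=
  strictMonoOn_of_deriv_pos (convex_Ioi 0)
    (fun y hy => (hC.hderiv_y hy hz).continuousAt.continuousWithinAt)
    (fun y hy => by
      rw [interior_Ioi] at hy
      rw [(hC.hderiv_y hy hz).deriv]
      exact hC.cy_pos hy hz)

lemma c_strictMonoZ (hC : AssumptionC c cy cz cyy cyz czz) {y : ℝ} (hy : 0 < y) :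
    StrictMonoOn (fun z => c y z) (Set.Ioi 0) :=
  strictMonoOn_of_deriv_pos (convex_Ioi 0)
    (fun z hz => (hC.hderiv_z hy hz).continuousAt.continuousWithinAt)
    (fun z hz => by
      rw [interior_Ioi] at hz
      rw [(hC.hderiv_z hy hz).deriv]
      exact hC.cz_pos hy hz)

lemma cy_antiY (hC : AssumptionC c cy cz cyy cyz czz) {z : ℝ} (hz : 0 < z) :
    StrictAntiOn (fun y => cy y z) (Set.Ioi 0) :=
  strictAntiOn_of_deriv_neg (convex_Ioi 0)
    (fun y hy => (hC.hderiv_yy hy hz).continuousAt.continuousWithinAt)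
    (fun y hy => by
      rw [interior_Ioi] at hy
      rw [(hC.hderiv_yy hy hz).deriv]
      exact hC.cyy_neg hy hz)

lemma cz_antiZ (hC : AssumptionC c cy cz cyy cyz czz) {y : ℝ} (hy : 0 < y) :
    StrictAntiOn (fun z => cz y z) (Set.Ioi 0) :=
  strictAntiOn_of_deriv_neg (convex_Ioi 0)
    (fun z hz => (hC.hderiv_zz hy hz).continuousAt.continuousWithinAt)
    (fun z hz => by
      rw [interior_Ioi] at hz
      rw [(hC.hderiv_zz hy hz).deriv]
      exact hC.czz_neg hy hz)

lemma c_le_y (hC : AssumptionC c cy cz cyy cyz czz) {y1 y2 z : ℝ}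
    (h1 : 0 < y1) (h12 : y1 ≤ y2) (hz : 0 < z) : c y1 z ≤ c y2 z :=
  (c_strictMonoY hC hz).monotoneOn (Set.mem_Ioi.2 h1)
    (Set.mem_Ioi.2 (lt_of_lt_of_le h1 h12)) h12

lemma c_le_z (hC : AssumptionC c cy cz cyy cyz czz) {y z1 z2 : ℝ}
    (hy : 0 < y) (h1 : 0 < z1) (h12 : z1 ≤ z2) : c y z1 ≤ c y z2 :=
  (c_strictMonoZ hC hy).monotoneOn (Set.mem_Ioi.2 h1)
    (Set.mem_Ioi.2 (lt_of_lt_of_le h1 h12)) h12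

lemma cy_le_y (hC : AssumptionC c cy cz cyy cyz czz) {y1 y2 z : ℝ}
    (h1 : 0 < y1) (h12 : y1 ≤ y2) (hz : 0 < z) : cy y2 z ≤ cy y1 z :=
  (cy_antiY hC hz).antitoneOn (Set.mem_Ioi.2 h1)
    (Set.mem_Ioi.2 (lt_of_lt_of_le h1 h12)) h12

lemma cz_le_z (hC : AssumptionC c cy cz cyy cyz czz) {y z1 z2 : ℝ}
    (hy : 0 < y) (h1 : 0 < z1) (h12 : z1 ≤ z2) : cz y z2 ≤ cz y z1 :=
  (cz_antiZ hC hy).antitoneOn (Set.mem_Ioi.2 h1)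
    (Set.mem_Ioi.2 (lt_of_lt_of_le h1 h12)) h12

/-- `cy` is positively homogeneous of degree 0. -/
lemma cy_homog (hC : AssumptionC c cy cz cyy cyz czz) {l y z : ℝ}
    (hl : 0 < l) (hy : 0 < y) (hz : 0 < z) : cy (l * y) (l * z) = cy y z := by
  have hinner : HasDerivAt (fun u : ℝ => l * u) l y := by
    simpa using (hasDerivAt_id y).const_mul l
  have h1 : HasDerivAt (fun u => c (l * u) (l * z)) (cy (l * y) (l * z) * l) y :=
    (hC.hderiv_y (mul_pos hl hy) (mul_pos hl hz)).comp y hinner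
  have h2 : HasDerivAt (fun u => l * c u z) (l * cy y z) y :=
    (hC.hderiv_y hy hz).const_mul l
  have heq : (fun u => l * c u z) =ᶠ[𝓝 y] (fun u => c (l * u) (l * z)) := by
    filter_upwards [eventually_gt_nhds hy] with u hu
    exact (hC.homog hl hu hz).symm
  have h2' : HasDerivAt (fun u => c (l * u) (l * z)) (l * cy y z) y :=
    h2.congr_of_eventuallyEq heq.symm
  have h3 := h1.unique h2'
  rw [mul_comm] at h3
  exact mul_left_cancel₀ (ne_of_gt hl) h3

/-- `cz` is positively homogeneous of degree 0. -/
lemma cz_homog (hC : AssumptionC c cy cz cyy cyz czz) {l y z : ℝ}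
    (hl : 0 < l) (hy : 0 < y) (hz : 0 < z) : cz (l * y) (l * z) = cz y z := by
  have hinner : HasDerivAt (fun v : ℝ => l * v) l z := by
    simpa using (hasDerivAt_id z).const_mul l
  have h1 : HasDerivAt (fun v => c (l * y) (l * v)) (cz (l * y) (l * z) * l) z :=
    (hC.hderiv_z (mul_pos hl hy) (mul_pos hl hz)).comp z hinner
  have h2 : HasDerivAt (fun v => l * c y v) (l * cz y z) z :=
    (hC.hderiv_z hy hz).const_mul l
  have heq : (fun v => l * c y v) =ᶠ[𝓝 z] (fun v => c (l * y) (l * v)) := by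
    filter_upwards [eventually_gt_nhds hz] with v hv
    exact (hC.homog hl hy hv).symm
  have h2' : HasDerivAt (fun v => c (l * y) (l * v)) (l * cz y z) z :=
    h2.congr_of_eventuallyEq heq.symm
  have h3 := h1.unique h2'
  rw [mul_comm] at h3
  exact mul_left_cancel₀ (ne_of_gt hl) h3

lemma cy_ratio (hC : AssumptionC c cy cz cyy cyz czz) {y z : ℝ}
    (hy : 0 < y) (hz : 0 < z) : cy y z = cy (y / z) 1 := by
  have := cy_homog hC hz (div_pos hy hz) one_pos
  rw [mul_one, mul_comm, div_mul_cancel₀ _ (ne_of_gt hz)] at this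
  exact this

lemma cz_ratio (hC : AssumptionC c cy cz cyy cyz czz) {y z : ℝ}
    (hy : 0 < y) (hz : 0 < z) : cz y z = cz 1 (z / y) := by
  have := cz_homog hC hy one_pos (div_pos hz hy)
  rw [mul_one, mul_comm y (z / y), div_mul_cancel₀ _ (ne_of_gt hy)] at this
  exact this

/-- `cy` is increasing in `z`. -/
lemma cy_le_z (hC : AssumptionC c cy cz cyy cyz czz) {y z1 z2 : ℝ}
    (hy : 0 < y) (h1 : 0 < z1) (h12 : z1 ≤ z2) : cy y z1 ≤ cy y z2 := by
  have h2 : 0 < z2 := lt_of_lt_of_le h1 h12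
  rw [cy_ratio hC hy h1, cy_ratio hC hy h2]
  exact cy_le_y hC (div_pos hy h2) (div_le_div_of_nonneg_left hy.le h1 h12) one_pos

/-- `cz` is increasing in `y`. -/
lemma cz_le_y (hC : AssumptionC c cy cz cyy cyz czz) {y1 y2 z : ℝ}
    (h1 : 0 < y1) (h12 : y1 ≤ y2) (hz : 0 < z) : cz y1 z ≤ cz y2 z := by
  have h2 : 0 < y2 := lt_of_lt_of_le h1 h12
  rw [cz_ratio hC h1 hz, cz_ratio hC h2 hz]
  exact cz_le_z hC one_pos (div_pos hz h2) (div_le_div_of_nonneg_left hz.le h1 h12)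

lemma rpow_inv_tendsto_one {C : ℝ} (hc : 0 < C) :
    Tendsto (fun t : ℕ => C ^ ((t : ℝ)⁻¹)) atTop (𝓝 1) := by
  have h1 : Tendsto (fun t : ℕ => Real.log C * (t : ℝ)⁻¹) atTop (𝓝 0) := by
    simpa using (tendsto_inv_atTop_nhds_zero_nat (𝕜 := ℝ)).const_mul (Real.log C)
  have h2 : Tendsto (fun t : ℕ => Real.exp (Real.log C * (t : ℝ)⁻¹)) atTop (𝓝 1) := by
    have := (Real.continuous_exp.tendsto 0).comp h1
    rw [Real.exp_zero] at this
    exact this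
  refine h2.congr fun t => ?_
  rw [Real.rpow_def_of_pos hc]

end StmtAux

open StmtAux

set_option maxHeartbeats 1000000 in
/-- Long run rent growth: if `0 < γ < 1`, in any equilibrium `limsup r_t^{1/t} = G^γ`. -/
theorem stmt_9 (c cy cz cyy cyz czz : ℝ → ℝ → ℝ)
    (hC : AssumptionC c cy cz cyy cyz czz) (e1 e2 G γ m : ℝ)
    (he1 : 0 < e1) (he2 : 0 < e2) (hG : 1 < G) (hγ0 : 0 < γ) (hγ1 : γ < 1) (hm : 0 < m)
    (S : ℕ → ℝ) (hS : IsEquilibrium c cy cz e1 e2 G γ m S) :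
    limsup (fun t : ℕ => rent c cy e1 e2 G γ m S t ^ ((t : ℝ)⁻¹)) atTop = G ^ γ := by
  have hG0 : (0:ℝ) < G := lt_trans one_pos hG
  have hGt : ∀ t : ℕ, (0:ℝ) < G ^ t := fun t => pow_pos hG0 t
  have he12 : (0:ℝ) < e1 + e2 := by linarith
  have hz1 : (0:ℝ) < e2 * G := mul_pos he2 hG0
  have hz2 : (0:ℝ) < (e1 + e2) * G := mul_pos he12 hG0
  set Q : ℝ := G ^ γ with hQdef
  have hQ1 : 1 < Q := by
    rw [hQdef]
    exact (Real.one_lt_rpow_iff_of_pos hG0).2 (Or.inl ⟨hG, hγ0⟩)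
  have hQ0 : 0 < Q := lt_trans one_pos hQ1
  have hQG : Q ≤ G := by
    rw [hQdef]
    calc G ^ γ ≤ G ^ (1:ℝ) := Real.rpow_le_rpow_of_exponent_le hG.le hγ1.le
    _ = G := Real.rpow_one G
  have hpowQ : ∀ t : ℕ, ((G : ℝ) ^ t) ^ γ = Q ^ t := by
    intro t
    rw [← Real.rpow_natCast G t, ← Real.rpow_mul hG0.le, mul_comm,
      Real.rpow_mul hG0.le, Real.rpow_natCast]
  -- notation
  set Y : ℕ → ℝ := fun t => e1 * G ^ t - S t with hYdef
  set Z : ℕ → ℝ := fun t => e2 * G ^ (t + 1) + S (t + 1) with hZdef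
  have hSpos : ∀ t, 0 < S t := fun t => (hS t).1
  have hSlt : ∀ t, S t < e1 * G ^ t := fun t => (hS t).2.1
  have hY : ∀ t, 0 < Y t := fun t => sub_pos.2 (hSlt t)
  have hZ : ∀ t, 0 < Z t := fun t => add_pos (mul_pos he2 (hGt (t+1))) (hSpos (t+1))
  have hYub : ∀ t, Y t ≤ e1 * G ^ t := fun t => by
    have := hSpos t; simp only [hYdef]; linarith
  have hZlb : ∀ t, e2 * G ^ (t+1) ≤ Z t := fun t => by
    have := hSpos (t+1); simp only [hZdef]; linarith
  have hZub : ∀ t, Z t ≤ (e1 + e2) * G ^ (t+1) := fun t => by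
    have h := hSlt (t+1)
    have : (e1 + e2) * G ^ (t+1) = e2 * G ^ (t+1) + e1 * G ^ (t+1) := by ring
    simp only [hZdef]; linarith
  have hEq : ∀ t, S (t+1) * cz (Y t) (Z t) = S t * cy (Y t) (Z t) - m * c (Y t) (Z t) ^ γ :=
    fun t => (hS t).2.2
  have hrent : ∀ t, rent c cy e1 e2 G γ m S t = m * c (Y t) (Z t) ^ γ / cy (Y t) (Z t) :=
    fun t => rfl
  -- global bound constants
  set C1 : ℝ := c e1 ((e1 + e2) * G) with hC1def
  have hC1 : 0 < C1 := hC.c_pos he1 hz2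
  set C2 : ℝ := cy e1 (e2 * G) with hC2def
  have hC2 : 0 < C2 := hC.cy_pos he1 hz1
  -- c(Y,Z) ≤ G^t * C1
  have hcub : ∀ t, c (Y t) (Z t) ≤ G ^ t * C1 := by
    intro t
    have h1 : c (Y t) (Z t) ≤ c (e1 * G ^ t) (Z t) := c_le_y hC (hY t) (hYub t) (hZ t)
    have h2 : c (e1 * G ^ t) (Z t) ≤ c (e1 * G ^ t) ((e1 + e2) * G ^ (t+1)) :=
      c_le_z hC (mul_pos he1 (hGt t)) (hZ t) (hZub t)
    have h3 : c (e1 * G ^ t) ((e1 + e2) * G ^ (t+1)) = G ^ t * C1 := by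
      rw [show e1 * G ^ t = G ^ t * e1 by ring,
        show (e1 + e2) * G ^ (t+1) = G ^ t * ((e1 + e2) * G) by ring]
      exact hC.homog (hGt t) he1 hz2
    linarith
  -- cy(Y,Z) ≥ C2
  have hcylb : ∀ t, C2 ≤ cy (Y t) (Z t) := by
    intro t
    have h1 : cy (e1 * G ^ t) (Z t) ≤ cy (Y t) (Z t) := cy_le_y hC (hY t) (hYub t) (hZ t)
    have h2 : cy (e1 * G ^ t) (e2 * G ^ (t+1)) ≤ cy (e1 * G ^ t) (Z t) :=
      cy_le_z hC (mul_pos he1 (hGt t)) (mul_pos he2 (hGt (t+1))) (hZlb t)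
    have h3 : cy (e1 * G ^ t) (e2 * G ^ (t+1)) = C2 := by
      rw [show e1 * G ^ t = G ^ t * e1 by ring,
        show e2 * G ^ (t+1) = G ^ t * (e2 * G) by ring]
      exact cy_homog hC (hGt t) he1 hz1
    linarith
  have hcpos : ∀ t, 0 < c (Y t) (Z t) := fun t => hC.c_pos (hY t) (hZ t)
  have hcypos : ∀ t, 0 < cy (Y t) (Z t) := fun t => hC.cy_pos (hY t) (hZ t)
  have hrpos : ∀ t, 0 < rent c cy e1 e2 G γ m S t := fun t => by
    rw [hrent t]
    exact div_pos (mul_pos hm (Real.rpow_pos_of_pos (hcpos t) γ)) (hcypos t)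
  -- upper bound r t ≤ A * Q^t
  set A : ℝ := m * C1 ^ γ / C2 with hAdef
  have hA : 0 < A := div_pos (mul_pos hm (Real.rpow_pos_of_pos hC1 γ)) hC2
  have hrub : ∀ t, rent c cy e1 e2 G γ m S t ≤ A * Q ^ t := by
    intro t
    rw [hrent t]
    have hnum : m * c (Y t) (Z t) ^ γ ≤ m * (G ^ t * C1) ^ γ :=
      mul_le_mul_of_nonneg_left
        (Real.rpow_le_rpow (hcpos t).le (hcub t) hγ0.le) hm.le
    have h4 : (G ^ t * C1 : ℝ) ^ γ = Q ^ t * C1 ^ γ := by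
      rw [Real.mul_rpow (pow_nonneg hG0.le t) hC1.le, hpowQ t]
    calc m * c (Y t) (Z t) ^ γ / cy (Y t) (Z t)
        ≤ m * (G ^ t * C1) ^ γ / C2 := by
          exact div_le_div₀
            (mul_pos hm (Real.rpow_pos_of_pos (mul_pos (hGt t) hC1) γ)).le
            hnum hC2 (hcylb t)
      _ = A * Q ^ t := by rw [h4, hAdef]; ring
  -- frequent lower bound: ∃ ε > 0, frequently ε * G^t ≤ Y t
  have hfreq : ∃ ε : ℝ, 0 < ε ∧ ∃ᶠ t in atTop, ε * G ^ t ≤ Y t := by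
    by_contra hcon
    push_neg at hcon
    -- so yh t := Y t / G^t → 0
    set yh : ℕ → ℝ := fun t => Y t / G ^ t with hyhdef
    set zh : ℕ → ℝ := fun t => Z t / G ^ t with hzhdef
    have hyhpos : ∀ t, 0 < yh t := fun t => div_pos (hY t) (hGt t)
    have hzhpos : ∀ t, 0 < zh t := fun t => div_pos (hZ t) (hGt t)
    have hyhe1 : ∀ t, yh t ≤ e1 := fun t =>
      (div_le_iff₀ (hGt t)).2 (by linarith [hYub t])
    have hzhlb : ∀ t, e2 * G ≤ zh t := fun t => by
      rw [hzhdef, le_div_iff₀ (hGt t)]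
      calc e2 * G * G ^ t = e2 * G ^ (t+1) := by ring
        _ ≤ Z t := hZlb t
    have hzhub : ∀ t, zh t ≤ (e1 + e2) * G := fun t => by
      rw [hzhdef, div_le_iff₀ (hGt t)]
      calc Z t ≤ (e1 + e2) * G ^ (t+1) := hZub t
        _ = (e1 + e2) * G * G ^ t := by ring
    have hYeq : ∀ t, G ^ t * yh t = Y t := fun t => by
      rw [hyhdef, mul_comm, div_mul_cancel₀ _ (ne_of_gt (hGt t))]
    have hZeq : ∀ t, G ^ t * zh t = Z t := fun t => by
      rw [hzhdef, mul_comm, div_mul_cancel₀ _ (ne_of_gt (hGt t))]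
    -- yh → 0
    have h0 : Tendsto yh atTop (𝓝 0) := by
      refine tendsto_order.2 ⟨fun a ha => Eventually.of_forall fun t => lt_trans ha (hyhpos t),
        fun a ha => ?_⟩
      have := hcon a ha
      filter_upwards [this] with t ht
      exact (div_lt_iff₀ (hGt t)).2 (by linarith)
    have h0' : Tendsto yh atTop (𝓝[>] 0) :=
      tendsto_nhdsWithin_iff.2 ⟨h0, Eventually.of_forall fun t => hyhpos t⟩
    have hcyTop : Tendsto (fun t => cy (yh t) (e2 * G)) atTop atTop :=
      (hC.inada_y hz1).comp h0'
    -- scaled equation bound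
    set D : ℝ := cz e1 (e2 * G) with hDdef
    have hD : 0 < D := hC.cz_pos he1 hz1
    set M : ℝ := e1 * G * D + m * C1 ^ γ with hMdef
    have hM : 0 < M := by
      rw [hMdef]
      exact add_pos (mul_pos (mul_pos he1 hG0) hD)
        (mul_pos hm (Real.rpow_pos_of_pos hC1 γ))
    have hkey : ∀ t, S t * cy (yh t) (zh t) ≤ G ^ t * M := by
      intro t
      have hcyr : cy (Y t) (Z t) = cy (yh t) (zh t) := by
        rw [← hYeq t, ← hZeq t]
        exact cy_homog hC (hGt t) (hyhpos t) (hzhpos t)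
      have hczr : cz (Y t) (Z t) = cz (yh t) (zh t) := by
        rw [← hYeq t, ← hZeq t]
        exact cz_homog hC (hGt t) (hyhpos t) (hzhpos t)
      have hcr : c (Y t) (Z t) = G ^ t * c (yh t) (zh t) := by
        rw [← hYeq t, ← hZeq t]
        exact hC.homog (hGt t) (hyhpos t) (hzhpos t)
      have heq := hEq t
      rw [hcyr, hczr, hcr] at heq
      -- S t * cy(yh,zh) = S(t+1)*cz(yh,zh) + m*(G^t * c yh zh)^γ
      have hterm1 : S (t+1) * cz (yh t) (zh t) ≤ e1 * G ^ (t+1) * D := by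
        have hcz1 : cz (yh t) (zh t) ≤ cz e1 (zh t) :=
          cz_le_y hC (hyhpos t) (hyhe1 t) (hzhpos t)
        have hcz2 : cz e1 (zh t) ≤ D := by
          rw [hDdef]
          exact cz_le_z hC he1 hz1 (hzhlb t)
        have hczpos : 0 < cz (yh t) (zh t) := hC.cz_pos (hyhpos t) (hzhpos t)
        exact mul_le_mul (hSlt (t+1)).le (le_trans hcz1 hcz2) hczpos.le
          (mul_pos he1 (hGt (t+1))).le
      have hterm2 : m * (G ^ t * c (yh t) (zh t)) ^ γ ≤ G ^ t * (m * C1 ^ γ) := by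
        have hcle : G ^ t * c (yh t) (zh t) ≤ G ^ t * C1 := by
          have := hcub t
          rw [hcr] at this
          exact this
        have h1 : (G ^ t * c (yh t) (zh t) : ℝ) ^ γ ≤ (G ^ t * C1) ^ γ :=
          Real.rpow_le_rpow
            (mul_pos (hGt t) (hC.c_pos (hyhpos t) (hzhpos t))).le hcle hγ0.le
        have h2 : (G ^ t * C1 : ℝ) ^ γ = Q ^ t * C1 ^ γ := by
          rw [Real.mul_rpow (pow_nonneg hG0.le t) hC1.le, hpowQ t]
        have h3 : Q ^ t ≤ G ^ t := pow_le_pow_left₀ hQ0.le hQG t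
        have h4 : (0:ℝ) ≤ C1 ^ γ := (Real.rpow_pos_of_pos hC1 γ).le
        calc m * (G ^ t * c (yh t) (zh t)) ^ γ ≤ m * (Q ^ t * C1 ^ γ) := by
              rw [← h2]; exact mul_le_mul_of_nonneg_left h1 hm.le
          _ ≤ m * (G ^ t * C1 ^ γ) := by
              exact mul_le_mul_of_nonneg_left
                (mul_le_mul_of_nonneg_right h3 h4) hm.le
          _ = G ^ t * (m * C1 ^ γ) := by ring
      have hGsucc : e1 * G ^ (t+1) * D = G ^ t * (e1 * G * D) := by ring
      rw [hMdef]
      have hexp : G ^ t * (e1 * G * D + m * C1 ^ γ)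
          = G ^ t * (e1 * G * D) + G ^ t * (m * C1 ^ γ) := by ring
      linarith [heq, hterm1, hterm2]
    -- eventually large contradiction
    have hev1 : ∀ᶠ t in atTop, yh t < e1 / 2 :=
      h0.eventually (eventually_lt_nhds (by linarith))
    have hev2 : ∀ᶠ t in atTop, 2 * M / e1 + 1 ≤ cy (yh t) (e2 * G) :=
      hcyTop.eventually_ge_atTop _
    obtain ⟨t, ht1, ht2⟩ := (hev1.and hev2).exists
    have hSlb : e1 / 2 * G ^ t ≤ S t := by
      have h1 : Y t = G ^ t * yh t := (hYeq t).symm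
      have h2 : S t = e1 * G ^ t - Y t := by simp only [hYdef]; ring
      have h3 : G ^ t * yh t ≤ G ^ t * (e1 / 2) :=
        mul_le_mul_of_nonneg_left ht1.le (hGt t).le
      rw [h2, h1]
      linarith
    have hcyz : cy (yh t) (e2 * G) ≤ cy (yh t) (zh t) :=
      cy_le_z hC (hyhpos t) hz1 (hzhlb t)
    have hcyzpos : 0 < cy (yh t) (zh t) := hC.cy_pos (hyhpos t) (hzhpos t)
    have hcontr : G ^ t * M < S t * cy (yh t) (zh t) := by
      have hKle : 2 * M / e1 + 1 ≤ cy (yh t) (zh t) := le_trans ht2 hcyz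
      have he1' : e1 ≠ 0 := ne_of_gt he1
      have hfs : e1 / 2 * (2 * M / e1 + 1) = M + e1 / 2 := by field_simp
      calc G ^ t * M < G ^ t * (M + e1 / 2) :=
            mul_lt_mul_of_pos_left (by linarith) (hGt t)
        _ = (e1 / 2 * G ^ t) * (2 * M / e1 + 1) := by rw [← hfs]; ring
        _ ≤ S t * cy (yh t) (zh t) := by
            apply mul_le_mul hSlb hKle (by positivity) (hSpos t).le
    exact absurd (hkey t) (not_le.2 hcontr)
  obtain ⟨ε, hε, hfr⟩ := hfreq
  -- lower bound along the frequent set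
  set B : ℝ := m * (c ε (e2 * G)) ^ γ / cy ε ((e1 + e2) * G) with hBdef
  have hcε : 0 < c ε (e2 * G) := hC.c_pos hε hz1
  have hcyε : 0 < cy ε ((e1 + e2) * G) := hC.cy_pos hε hz2
  have hB : 0 < B := div_pos (mul_pos hm (Real.rpow_pos_of_pos hcε γ)) hcyε
  have hlbt : ∀ t, ε * G ^ t ≤ Y t → B * Q ^ t ≤ rent c cy e1 e2 G γ m S t := by
    intro t ht
    rw [hrent t]
    have hεG : 0 < ε * G ^ t := mul_pos hε (hGt t)
    have hclb : G ^ t * c ε (e2 * G) ≤ c (Y t) (Z t) := by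
      have h1 : c (ε * G ^ t) (e2 * G ^ (t+1)) ≤ c (ε * G ^ t) (Z t) :=
        c_le_z hC hεG (mul_pos he2 (hGt (t+1))) (hZlb t)
      have h2 : c (ε * G ^ t) (Z t) ≤ c (Y t) (Z t) :=
        c_le_y hC hεG ht (hZ t)
      have h3 : c (ε * G ^ t) (e2 * G ^ (t+1)) = G ^ t * c ε (e2 * G) := by
        rw [show ε * G ^ t = G ^ t * ε by ring,
          show e2 * G ^ (t+1) = G ^ t * (e2 * G) by ring]
        exact hC.homog (hGt t) hε hz1
      linarith
    have hcyub : cy (Y t) (Z t) ≤ cy ε ((e1 + e2) * G) := by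
      have h1 : cy (Y t) (Z t) ≤ cy (ε * G ^ t) (Z t) := cy_le_y hC hεG ht (hZ t)
      have h2 : cy (ε * G ^ t) (Z t) ≤ cy (ε * G ^ t) ((e1 + e2) * G ^ (t+1)) :=
        cy_le_z hC hεG (hZ t) (hZub t)
      have h3 : cy (ε * G ^ t) ((e1 + e2) * G ^ (t+1)) = cy ε ((e1 + e2) * G) := by
        rw [show ε * G ^ t = G ^ t * ε by ring,
          show (e1 + e2) * G ^ (t+1) = G ^ t * ((e1 + e2) * G) by ring]
        exact cy_homog hC (hGt t) hε hz2
      linarith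
    have hnum : m * (G ^ t * c ε (e2 * G)) ^ γ ≤ m * c (Y t) (Z t) ^ γ :=
      mul_le_mul_of_nonneg_left
        (Real.rpow_le_rpow (by positivity) hclb hγ0.le) hm.le
    have h4 : (G ^ t * c ε (e2 * G) : ℝ) ^ γ = Q ^ t * (c ε (e2 * G)) ^ γ := by
      rw [Real.mul_rpow (pow_nonneg hG0.le t) hcε.le, hpowQ t]
    calc B * Q ^ t = m * (G ^ t * c ε (e2 * G)) ^ γ / cy ε ((e1 + e2) * G) := by
          rw [h4, hBdef]; ring
      _ ≤ m * c (Y t) (Z t) ^ γ / cy (Y t) (Z t) :=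
          div_le_div₀ (mul_pos hm (Real.rpow_pos_of_pos (hcpos t) γ)).le
            hnum (hcypos t) hcyub
  -- endgame
  set f : ℕ → ℝ := fun t => rent c cy e1 e2 G γ m S t ^ ((t : ℝ)⁻¹) with hfdef
  have hfle : ∀ᶠ t in atTop, f t ≤ A ^ ((t : ℝ)⁻¹) * Q := by
    filter_upwards [eventually_ge_atTop 1] with t ht
    have htR : (0:ℝ) < (t : ℝ) := by exact_mod_cast Nat.pos_of_ne_zero (by omega)
    have h1 : f t ≤ (A * Q ^ t) ^ ((t : ℝ)⁻¹) :=
      Real.rpow_le_rpow (hrpos t).le (hrub t) (by positivity)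
    have h2 : (A * Q ^ t : ℝ) ^ ((t : ℝ)⁻¹) = A ^ ((t : ℝ)⁻¹) * Q := by
      rw [Real.mul_rpow hA.le (pow_nonneg hQ0.le t), ← Real.rpow_natCast Q t,
        ← Real.rpow_mul hQ0.le, mul_inv_cancel₀ (ne_of_gt htR), Real.rpow_one]
    rw [← h2]; exact h1
  have htendA : Tendsto (fun t : ℕ => A ^ ((t : ℝ)⁻¹) * Q) atTop (𝓝 Q) := by
    simpa using (rpow_inv_tendsto_one hA).mul_const Q
  have hbddg : IsBoundedUnder (· ≤ ·) atTop (fun t : ℕ => A ^ ((t : ℝ)⁻¹) * Q) :=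
    htendA.isBoundedUnder_le
  have hbddf : IsBoundedUnder (· ≤ ·) atTop f := hbddg.mono_le hfle
  have hcobddf : IsCoboundedUnder (· ≤ ·) atTop f :=
    isCoboundedUnder_le_of_le atTop fun t => Real.rpow_nonneg (hrpos t).le _
  have hup : limsup f atTop ≤ Q := by
    have := limsup_le_limsup hfle hcobddf hbddg
    rwa [htendA.limsup_eq] at this
  have hlow : Q ≤ limsup f atTop := by
    apply le_of_forall_sub_le
    intro δ hδ
    have htendB : Tendsto (fun t : ℕ => B ^ ((t : ℝ)⁻¹) * Q) atTop (𝓝 Q) := by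
      simpa using (rpow_inv_tendsto_one hB).mul_const Q
    have hev : ∀ᶠ t : ℕ in atTop, Q - δ ≤ B ^ ((t : ℝ)⁻¹) * Q :=
      htendB.eventually (eventually_ge_nhds (by linarith))
    have hfr2 : ∃ᶠ t in atTop, Q - δ ≤ f t := by
      refine (hfr.and_eventually (hev.and (eventually_ge_atTop 1))).mono ?_
      rintro t ⟨hYt, hBt, ht1⟩
      have htR : (0:ℝ) < (t : ℝ) := by exact_mod_cast Nat.pos_of_ne_zero (by omega)
      have h1 : (B * Q ^ t : ℝ) ^ ((t : ℝ)⁻¹) ≤ f t :=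
        Real.rpow_le_rpow (mul_pos hB (pow_pos hQ0 t)).le (hlbt t hYt)
          (by positivity)
      have h2 : (B * Q ^ t : ℝ) ^ ((t : ℝ)⁻¹) = B ^ ((t : ℝ)⁻¹) * Q := by
        rw [Real.mul_rpow hB.le (pow_nonneg hQ0.le t), ← Real.rpow_natCast Q t,
          ← Real.rpow_mul hQ0.le, mul_inv_cancel₀ (ne_of_gt htR), Real.rpow_one]
      rw [h2] at h1
      linarith
    exact le_limsup_of_frequently_le hfr2 hbddf
  exact le_antisymm hup hlow
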